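/- arXiv:1502.03142 — 3 statements merged into one kernel-verified Lean document; each statement's English description precedes it below -/
import Mathlib

section
/- For every a with 0 < a < 1, the characteristic equation λ = a(1 - e^{-λ}) has a unique nonzero real root κ, and κ < 0. -/
/-- For `0 < a < 1`, the equation `λ = a(1 - e^{-λ})` has a unique nonzero real root `κ`,
and `κ < 0`. -/
theorem stmt_3 (a : ℝ) (ha0 : 0 < a) (ha1 : a < 1) :
    ∃ κ : ℝ, κ < 0 ∧ κ = a * (1 - Real.exp (-κ)) ∧
      ∀ l : ℝ, l ≠ 0 → l = a * (1 - Real.exp (-l)) → l = κ := by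
  set h : ℝ → ℝ := fun x => x - a * (1 - Real.exp (-x)) with hh
  have hderiv : ∀ x, HasDerivAt h (1 - a * Real.exp (-x)) x := by
    intro x
    have h1 : HasDerivAt (fun x : ℝ => Real.exp (-x)) (Real.exp (-x) * (-1)) x :=
      ((hasDerivAt_id x).neg).exp
    have h2 := (hasDerivAt_id x).sub (((hasDerivAt_const x (1:ℝ)).sub h1).const_mul a)
    exact h2.congr_deriv (by ring)
  have hcont : Continuous h := by
    fun_prop
  have hla : Real.log a < 0 := Real.log_neg ha0 ha1
  have hexpla : Real.exp (-Real.log a) = 1 / a := by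
    rw [Real.exp_neg, Real.exp_log ha0, one_div]
  have hanti : StrictAntiOn h (Set.Iic (Real.log a)) := by
    apply strictAntiOn_of_deriv_neg (convex_Iic _) hcont.continuousOn
    intro x hx
    rw [interior_Iic, Set.mem_Iio] at hx
    rw [(hderiv x).deriv]
    have hx' : Real.exp (-Real.log a) < Real.exp (-x) := Real.exp_lt_exp.mpr (by linarith)
    rw [hexpla] at hx'
    have : 1 < a * Real.exp (-x) := by
      rw [div_lt_iff₀ ha0] at hx'
      nlinarith
    linarith
  have hmono : StrictMonoOn h (Set.Ici (Real.log a)) := by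
    apply strictMonoOn_of_deriv_pos (convex_Ici _) hcont.continuousOn
    intro x hx
    rw [interior_Ici, Set.mem_Ioi] at hx
    rw [(hderiv x).deriv]
    have hx' : Real.exp (-x) < Real.exp (-Real.log a) := Real.exp_lt_exp.mpr (by linarith)
    rw [hexpla] at hx'
    have : a * Real.exp (-x) < 1 := by
      rw [lt_div_iff₀ ha0] at hx'
      nlinarith
    linarith
  have h0 : h 0 = 0 := by simp [hh]
  have hloga_neg : h (Real.log a) < 0 := by
    have := Real.log_lt_sub_one_of_pos ha0 (by linarith)
    simp only [hh, hexpla]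
    have ha' : a * (1 - 1/a) = a - 1 := by field_simp
    rw [ha']
    linarith
  -- point M = -4/a where h is positive
  set M : ℝ := -(4 / a) with hM
  have hMla : M ≤ Real.log a := by
    have h1 : Real.log (1/a) ≤ 1/a - 1 := Real.log_le_sub_one_of_pos (by positivity)
    rw [Real.log_div one_ne_zero (ne_of_gt ha0), Real.log_one] at h1
    have h2 : 1 - 1/a ≤ Real.log a := by linarith
    have h3 : -(4/a) ≤ 1 - 1/a := by
      rw [neg_le, ← sub_nonneg]
      have : (4:ℝ)/a - 1/a = 3/a := by ring
      nlinarith [div_pos (by norm_num : (3:ℝ) > 0) ha0]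
    show -(4/a) ≤ Real.log a
    linarith
  have hMpos : 4 ≤ h M := by
    have he : 2/a + 1 ≤ Real.exp (2/a) := by linarith [Real.add_one_le_exp (2/a)]
    have hnn : (0:ℝ) ≤ 2/a + 1 := by positivity
    have hsq : (2/a + 1)^2 ≤ (Real.exp (2/a))^2 := by
      apply pow_le_pow_left₀ hnn he
    have hexp : Real.exp (-M) = (Real.exp (2/a))^2 := by
      rw [← Real.exp_nat_mul]
      congr 1
      push_cast
      rw [hM]
      ring
    have hexp' : (2/a + 1)^2 ≤ Real.exp (-M) := by rw [hexp]; exact hsq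
    have hkey : a * (2/a + 1)^2 = 4/a + 4 + a := by field_simp; ring
    have : a * (2/a + 1)^2 ≤ a * Real.exp (-M) :=
      mul_le_mul_of_nonneg_left hexp' (le_of_lt ha0)
    simp only [hh, hM]
    nlinarith
  -- IVT
  have hsub := intermediate_value_Icc' hMla hcont.continuousOn
  have h0mem : (0:ℝ) ∈ Set.Icc (h (Real.log a)) (h M) := ⟨le_of_lt hloga_neg, by linarith⟩
  obtain ⟨κ, hκmem, hκ0⟩ := hsub h0mem
  have hκlt : κ < Real.log a := by
    rcases lt_or_eq_of_le hκmem.2 with h' | h'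
    · exact h'
    · rw [h'] at hκ0; rw [hκ0] at hloga_neg; norm_num at hloga_neg
  refine ⟨κ, by linarith, by simp only [hh] at hκ0; linarith, ?_⟩
  intro l hl hleq
  have hhl : h l = 0 := by show l - a * (1 - Real.exp (-l)) = 0; linarith
  rcases lt_trichotomy l (Real.log a) with hc | hc | hc
  · exact hanti.injOn (le_of_lt hc) (le_of_lt hκlt) (by rw [hhl, hκ0])
  · rw [hc] at hhl
    rw [hhl] at hloga_neg
    norm_num at hloga_neg
  · exfalso
    apply hl
    exact hmono.injOn (Set.mem_Ici.mpr (le_of_lt hc)) (Set.mem_Ici.mpr (le_of_lt hla))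
      (by rw [hhl, h0])
end

section
/- Let c > 0 and let h : V → ℝ be continuous on an open interval V containing 0 with h(z) = -c|z|z + o(|z|²) as z → 0. Then the zero solution of the scalar ODE z'(t) = h(z(t)) is locally asymptotically stable: there is δ > 0 such that every solution with |z(0)| < δ exists for all t ≥ 0, satisfies |z(t)| ≤ |z(0)| for all t ≥ 0, and z(t) → 0 as t → ∞. -/
open Filter Topology

/-- If `h` is continuous near `0`, `h(0) = 0`, and `h(z) = -c|z|z + o(|z|²)` as `z → 0` with
`c > 0`, then the zero solution of `z' = h(z)` is locally asymptotically stable. -/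
theorem stmt_6 (c : ℝ) (hc : 0 < c) (V : Set ℝ) (hV : IsOpen V) (hV0 : (0 : ℝ) ∈ V)
    (h : ℝ → ℝ) (hcont : ContinuousOn h V) (h0 : h 0 = 0)
    (hasym : Tendsto (fun z : ℝ => (h z + c * |z| * z) / z ^ 2) (𝓝[≠] 0) (𝓝 0)) :
    ∃ δ > 0, ∀ z : ℝ → ℝ,
      (∀ t : ℝ, 0 ≤ t → HasDerivAt z (h (z t)) t) → |z 0| < δ →
        (∀ t : ℝ, 0 ≤ t → |z t| ≤ |z 0|) ∧ Tendsto z atTop (𝓝 0) := by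
  have hev : ∀ᶠ x in 𝓝 (0:ℝ), x ∈ ({0}ᶜ : Set ℝ) →
      |(h x + c * |x| * x) / x ^ 2| < c / 2 := by
    rw [← eventually_nhdsWithin_iff]
    have := Metric.tendsto_nhds.mp hasym (c/2) (by positivity)
    filter_upwards [this] with x hx
    rw [Real.dist_eq, sub_zero] at hx
    exact hx
  rw [Metric.eventually_nhds_iff] at hev
  obtain ⟨δ, hδ, hδ'⟩ := hev
  have key : ∀ x : ℝ, |x| < δ → x * h x ≤ -(c/2) * |x|^3 := by
    intro x hx
    rcases eq_or_ne x 0 with rfl | hx0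
    · simp [h0]
    · have hx2 : (0:ℝ) < x^2 := by positivity
      have hd := hδ' (y := x) (by simpa [Real.dist_eq] using hx) hx0
      have hb : |h x + c * |x| * x| < c/2 * x^2 := by
        rwa [abs_div, div_lt_iff₀ (by positivity), abs_of_nonneg (sq_nonneg x)] at hd
      have h1 : x * (h x + c * |x| * x) ≤ |x| * (c/2 * x^2) := by
        calc x * (h x + c * |x| * x) ≤ |x * (h x + c * |x| * x)| := le_abs_self _
          _ = |x| * |h x + c * |x| * x| := abs_mul _ _
          _ ≤ |x| * (c/2 * x^2) := mul_le_mul_of_nonneg_left hb.le (abs_nonneg x)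
      have h2 : |x|^3 = |x| * x^2 := by rw [← sq_abs]; ring
      nlinarith [h1, h2]
  refine ⟨δ, hδ, fun z hz hz0 => ?_⟩
  set ε := (|z 0| + δ)/2 with hεdef
  have hε0 : 0 < ε := by have := abs_nonneg (z 0); positivity
  have hz0ε : |z 0| < ε := by rw [hεdef]; linarith
  have hεδ : ε < δ := by rw [hεdef]; linarith
  have hzc : ContinuousOn z (Set.Ici 0) := fun t ht =>
    ((hz t ht).continuousAt).continuousWithinAt
  have hg : ∀ t : ℝ, 0 ≤ t → HasDerivAt (fun s => z s ^ 2) (2 * z t * h (z t)) t := by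
    intro t ht
    have : HasDerivAt (fun s => z s ^ 2) _ t := (hz t ht).fun_pow 2
    convert this using 1
    push_cast
    ring
  -- Step 1: the solution stays in the ball of radius ε
  have step1 : ∀ t : ℝ, 0 ≤ t → |z t| < ε := by
    by_contra hcon
    push_neg at hcon
    obtain ⟨t₀, ht₀, hεt₀⟩ := hcon
    have hSeq : {t : ℝ | 0 ≤ t ∧ ε ≤ |z t|}
        = Set.Ici 0 ∩ (fun t => |z t|) ⁻¹' Set.Ici ε := by
      ext t; simp [Set.mem_setOf_eq]
    have hSne : ({t : ℝ | 0 ≤ t ∧ ε ≤ |z t|}).Nonempty := ⟨t₀, ht₀, hεt₀⟩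
    have hSc : IsClosed {t : ℝ | 0 ≤ t ∧ ε ≤ |z t|} := by
      rw [hSeq]
      exact ContinuousOn.preimage_isClosed_of_isClosed
        (continuous_abs.comp_continuousOn hzc) isClosed_Ici isClosed_Ici
    have hbdd : BddBelow {t : ℝ | 0 ≤ t ∧ ε ≤ |z t|} := ⟨0, fun t ht => ht.1⟩
    set T := sInf {t : ℝ | 0 ≤ t ∧ ε ≤ |z t|} with hT
    have hTS : T ∈ {t : ℝ | 0 ≤ t ∧ ε ≤ |z t|} := hSc.csInf_mem hSne hbdd
    have hanti : AntitoneOn (fun s => z s ^ 2) (Set.Icc 0 T) := by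
      apply antitoneOn_of_deriv_nonpos (convex_Icc 0 T)
      · exact (hzc.mono Set.Icc_subset_Ici_self).pow 2
      · intro x hx
        rw [interior_Icc] at hx
        exact (hg x hx.1.le).differentiableAt.differentiableWithinAt
      · intro x hx
        rw [interior_Icc] at hx
        rw [(hg x hx.1.le).deriv]
        have hxlt : |z x| < ε := by
          by_contra hge
          push_neg at hge
          exact absurd (csInf_le hbdd ⟨hx.1.le, hge⟩) (not_le.mpr hx.2)
        have := key (z x) (hxlt.trans hεδ)
        nlinarith [abs_nonneg (z x), pow_nonneg (abs_nonneg (z x)) 3]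
    have hle := hanti (Set.left_mem_Icc.mpr hTS.1) (Set.right_mem_Icc.mpr hTS.1) hTS.1
    simp only at hle
    have h1 : |z T| ≤ |z 0| := sq_le_sq.mp hle
    linarith [hTS.2]
  -- Step 2: z^2 is antitone on [0, ∞)
  have hanti : AntitoneOn (fun s => z s ^ 2) (Set.Ici 0) := by
    apply antitoneOn_of_deriv_nonpos (convex_Ici 0) (hzc.pow 2)
    · intro x hx
      rw [interior_Ici] at hx
      exact (hg x hx.le).differentiableAt.differentiableWithinAt
    · intro x hx
      rw [interior_Ici] at hx
      rw [show z ^ 2 = fun s => z s ^ 2 from rfl, (hg x hx.le).deriv]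
      have := key (z x) ((step1 x hx.le).trans hεδ)
      nlinarith [pow_nonneg (abs_nonneg (z x)) 3]
  have main1 : ∀ t, 0 ≤ t → |z t| ≤ |z 0| := by
    intro t ht
    have := hanti Set.self_mem_Ici (Set.mem_Ici.mpr ht) ht
    simp only at this
    exact sq_le_sq.mp this
  refine ⟨main1, ?_⟩
  rw [Metric.tendsto_atTop]
  intro r hr
  set r' := min r ε with hr'def
  have hr'0 : 0 < r' := lt_min hr hε0
  have hr'δ : r' < δ := (min_le_right r ε).trans_lt hεδ
  have hex : ∃ t₀ : ℝ, 0 ≤ t₀ ∧ |z t₀| < r' := by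
    by_contra hcon
    push_neg at hcon
    have hGd : ∀ x : ℝ, 0 ≤ x → HasDerivAt (fun s => z s ^ 2 + c/2 * r'^3 * s)
        (2 * z x * h (z x) + c/2 * r'^3) x := by
      intro x hx
      have h2 : HasDerivAt (fun s : ℝ => c/2 * r'^3 * s) (c/2 * r'^3) x := by
        simpa using (hasDerivAt_id x).const_mul (c/2 * r'^3)
      exact (hg x hx).add h2
    have hG : AntitoneOn (fun s => z s ^ 2 + c/2 * r'^3 * s) (Set.Ici 0) := by
      apply antitoneOn_of_deriv_nonpos (convex_Ici 0)
      · exact (hzc.pow 2).add (Continuous.continuousOn (by continuity))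
      · intro x hx
        rw [interior_Ici] at hx
        exact (hGd x hx.le).differentiableAt.differentiableWithinAt
      · intro x hx
        rw [interior_Ici] at hx
        rw [(hGd x hx.le).deriv]
        have hk := key (z x) ((step1 x hx.le).trans hεδ)
        have hr'z : r' ≤ |z x| := hcon x hx.le
        have hp : c * r'^3 ≤ c * |z x|^3 :=
          mul_le_mul_of_nonneg_left (pow_le_pow_left₀ hr'0.le hr'z 3) hc.le
        have hq : 0 ≤ c * r'^3 := by positivity
        nlinarith [hk, hp, hq]
    set m := c/2 * r'^3 with hm
    have hm0 : 0 < m := by positivity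
    set t := (z 0 ^ 2 + 1) / m with ht
    have ht0 : 0 ≤ t := by positivity
    have hle := hG Set.self_mem_Ici (Set.mem_Ici.mpr ht0) ht0
    simp only at hle
    have hmt : m * t = z 0 ^ 2 + 1 := by
      rw [ht]; field_simp
    nlinarith [sq_nonneg (z t)]
  obtain ⟨t₀, ht₀, hlt⟩ := hex
  refine ⟨t₀, fun t ht => ?_⟩
  rw [Real.dist_eq, sub_zero]
  have h1 := hanti (Set.mem_Ici.mpr ht₀) (Set.mem_Ici.mpr (ht₀.trans ht)) ht
  simp only at h1
  have h2 : |z t| ≤ |z t₀| := sq_le_sq.mp h1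
  exact (h2.trans_lt hlt).trans_le (min_le_left r ε)
end

section
/- Let c > 0 and h : ℝ → ℝ with h(z) = c|z|z + o(|z|²) as z → 0 (positive leading coefficient). Then the zero solution of z' = h(z) is unstable: for every δ > 0 there is an initial condition with |z(0)| < δ whose solution leaves a fixed neighborhood of 0 in finite time. -/
open Filter Topology

/-- If `h(z) = c|z|z + o(|z|²)` as `z → 0` with `c > 0`, then the zero solution of
`z' = h(z)` is unstable: some solution with arbitrarily small initial value leaves a fixed
neighborhood of `0` in finite time. -/
theorem stmt_7 (c : ℝ) (hc : 0 < c) (h : ℝ → ℝ) (hcont : Continuous h) (h0 : h 0 = 0)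
    (hasym : Tendsto (fun z : ℝ => (h z - c * |z| * z) / z ^ 2) (𝓝[≠] 0) (𝓝 0)) :
    ∃ ε > 0, ∀ δ > 0, ∃ z : ℝ → ℝ, ∃ T : ℝ, 0 < T ∧ |z 0| < δ ∧
      (∀ t ∈ Set.Icc 0 T, HasDerivAt z (h (z t)) t) ∧ ε ≤ |z T| := by
  rw [Metric.tendsto_nhdsWithin_nhds] at hasym
  obtain ⟨r, hr, hball⟩ := hasym (c / 2) (by linarith)
  -- on (0, r), h y ≥ (c/2) y²
  have key : ∀ y : ℝ, 0 < y → y < r → c / 2 * y ^ 2 ≤ h y := by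
    intro y hy hyr
    have hy0 : y ≠ 0 := ne_of_gt hy
    have := hball (by simpa using hy0) (by simp [Real.dist_eq, abs_of_pos hy]; linarith)
    rw [Real.dist_eq, sub_zero, abs_of_pos hy] at this
    have hy2 : (0:ℝ) < y ^ 2 := by positivity
    rw [abs_div, div_lt_iff₀ (by rwa [abs_of_pos hy2])] at this
    rw [abs_of_pos hy2] at this
    have h2 := abs_lt.1 this
    nlinarith [h2.1]
  refine ⟨r / 2, by linarith, fun δ hδ => ?_⟩
  set z₀ : ℝ := min (δ / 2) (r / 4) with hz₀def
  have hz₀ : 0 < z₀ := lt_min (by linarith) (by linarith)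
  set a : ℝ := z₀ / 2 with hadef
  set b : ℝ := r / 2 with hbdef
  set b' : ℝ := 3 / 4 * r with hb'def
  have ha : 0 < a := by positivity
  have haz₀ : a < z₀ := by simp only [hadef]; linarith
  have hz₀b : z₀ < b := lt_of_le_of_lt (min_le_right _ _) (by rw [hbdef]; linarith)
  have hbb' : b < b' := by rw [hbdef, hb'def]; linarith
  have hb'r : b' < r := by rw [hb'def]; linarith
  have hab' : a ≤ b' := by linarith
  -- positivity of h on [a, b']
  have hpos : ∀ y ∈ Set.Icc a b', 0 < h y := by
    intro y hy
    have h1 : 0 < y := lt_of_lt_of_le ha hy.1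
    have h2 : y < r := lt_of_le_of_lt hy.2 hb'r
    have := key y h1 h2
    nlinarith [pow_pos h1 2]
  set φ : ℝ → ℝ := fun y => (h y)⁻¹ with hφdef
  have hφpos : ∀ y ∈ Set.Icc a b', 0 < φ y := fun y hy => inv_pos.2 (hpos y hy)
  have hφcontAt : ∀ y ∈ Set.Icc a b', ContinuousAt φ y := fun y hy =>
    (hcont.continuousAt).inv₀ (ne_of_gt (hpos y hy))
  have hφcontOn : ContinuousOn φ (Set.Icc a b') := fun y hy =>
    (hφcontAt y hy).continuousWithinAt
  set F : ℝ → ℝ := fun u => ∫ y in a..u, φ y with hFdef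
  have hmeas : ∀ u : ℝ, StronglyMeasurableAtFilter φ (𝓝 u) MeasureTheory.volume :=
    fun u => (hcont.measurable.inv.stronglyMeasurable).stronglyMeasurableAtFilter
  have hFderiv : ∀ u ∈ Set.Icc a b', HasStrictDerivAt F (φ u) u := by
    intro u hu
    refine intervalIntegral.integral_hasStrictDerivAt_right ?_ (hmeas u) (hφcontAt u hu)
    apply ContinuousOn.intervalIntegrable
    apply hφcontOn.mono
    rw [Set.uIcc_of_le hu.1]
    exact Set.Icc_subset_Icc_right hu.2
  have hFcont : ContinuousOn F (Set.Icc a b') := fun u hu =>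
    ((hFderiv u hu).hasDerivAt.continuousAt).continuousWithinAt
  have hFmono : StrictMonoOn F (Set.Icc a b') := by
    apply strictMonoOn_of_hasDerivWithinAt_pos (convex_Icc a b') hFcont
      (f' := φ)
    · intro x hx
      exact ((hFderiv x (interior_subset hx)).hasDerivAt.hasDerivWithinAt)
    · intro x hx
      rw [interior_Icc] at hx
      exact hφpos x (Set.mem_of_mem_of_subset hx Set.Ioo_subset_Icc_self)
  have himg : F '' Set.Icc a b' = Set.Icc (F a) (F b') := by
    apply Set.Subset.antisymm
    · rintro _ ⟨x, hx, rfl⟩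
      exact ⟨hFmono.monotoneOn (Set.left_mem_Icc.2 hab') hx hx.1,
        hFmono.monotoneOn hx (Set.right_mem_Icc.2 hab') hx.2⟩
    · exact intermediate_value_Icc hab' hFcont
  set g : ℝ → ℝ := Function.invFunOn F (Set.Icc a b') with hgdef
  have hgmem : ∀ y ∈ Set.Icc (F a) (F b'), g y ∈ Set.Icc a b' := by
    intro y hy
    rw [← himg] at hy
    obtain ⟨x, hx, rfl⟩ := hy
    exact Function.invFunOn_mem ⟨x, hx, rfl⟩
  have hFg : ∀ y ∈ Set.Icc (F a) (F b'), F (g y) = y := by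
    intro y hy
    rw [← himg] at hy
    obtain ⟨x, hx, rfl⟩ := hy
    exact Function.invFunOn_eq ⟨x, hx, rfl⟩
  have hgF : ∀ x ∈ Set.Icc a b', g (F x) = x := fun x hx =>
    hFmono.injOn.leftInvOn_invFunOn hx
  have hgimg : g '' Set.Icc (F a) (F b') = Set.Icc a b' := by
    apply Set.Subset.antisymm
    · rintro _ ⟨y, hy, rfl⟩; exact hgmem y hy
    · intro x hx
      exact ⟨F x, ⟨hFmono.monotoneOn (Set.left_mem_Icc.2 hab') hx hx.1,
        hFmono.monotoneOn hx (Set.right_mem_Icc.2 hab') hx.2⟩, hgF x hx⟩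
  have hgmono : StrictMonoOn g (Set.Icc (F a) (F b')) := by
    intro u hu v hv huv
    rw [← (hFmono.lt_iff_lt (hgmem u hu) (hgmem v hv)), hFg u hu, hFg v hv]
    exact huv
  -- F a < F z₀, F b < F b'
  have hz₀mem : z₀ ∈ Set.Icc a b' := ⟨le_of_lt haz₀, by linarith⟩
  have hbmem : b ∈ Set.Icc a b' := ⟨by linarith, le_of_lt hbb'⟩
  have hamem : a ∈ Set.Icc a b' := Set.left_mem_Icc.2 hab'
  have hb'mem : b' ∈ Set.Icc a b' := Set.right_mem_Icc.2 hab'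
  have hFa : F a < F z₀ := hFmono hamem hz₀mem haz₀
  have hFz₀b : F z₀ < F b := hFmono hz₀mem hbmem hz₀b
  have hFb : F b < F b' := hFmono hbmem hb'mem hbb'
  -- key derivative fact for g on the open interval
  have hgderiv : ∀ t ∈ Set.Ioo (F a) (F b'), HasDerivAt g (h (g t)) t := by
    intro t ht
    have htIcc : t ∈ Set.Icc (F a) (F b') := Set.Ioo_subset_Icc_self ht
    have hgt := hgmem t htIcc
    have hgcont : ContinuousAt g t := by
      refine hgmono.continuousAt_of_image_mem_nhds
        (Icc_mem_nhds ht.1 ht.2) ?_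
      rw [hgimg]
      have hFaFb' : F a ≤ F b' := le_of_lt (ht.1.trans ht.2)
      have hgt' : g t ∈ Set.Ioo a b' := by
        constructor
        · have h1 := hgmono (Set.left_mem_Icc.2 hFaFb') htIcc ht.1
          rwa [hgF a hamem] at h1
        · have h1 := hgmono htIcc (Set.right_mem_Icc.2 hFaFb') ht.2
          rwa [hgF b' hb'mem] at h1
      exact Filter.mem_of_superset (Ioo_mem_nhds hgt'.1 hgt'.2) Set.Ioo_subset_Icc_self
    have hfg : ∀ᶠ y in 𝓝 t, F (g y) = y := by
      filter_upwards [Ioo_mem_nhds ht.1 ht.2] with y hy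
      exact hFg y (Set.Ioo_subset_Icc_self hy)
    have := HasDerivAt.of_local_left_inverse hgcont
      ((hFderiv (g t) hgt).hasDerivAt) (ne_of_gt (hφpos (g t) hgt)) hfg
    simpa [hφdef, inv_inv] using this
  -- the solution
  refine ⟨fun t => g (t + F z₀), F b - F z₀, by linarith, ?_, ?_, ?_⟩
  · simp only [zero_add]
    rw [hgF z₀ hz₀mem, abs_of_pos hz₀]
    exact lt_of_le_of_lt (min_le_left _ _) (by linarith)
  · intro t ht
    have hmem : t + F z₀ ∈ Set.Ioo (F a) (F b') := by
      constructor
      · have := ht.1; linarith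
      · have := ht.2; linarith
    have hg' := hgderiv (t + F z₀) hmem
    have hid : HasDerivAt (fun t : ℝ => t + F z₀) 1 t := (hasDerivAt_id t).add_const _
    have := HasDerivAt.comp t hg' hid
    simp only [mul_one] at this
    exact this
  · have heq : F b - F z₀ + F z₀ = F b := by ring
    show b ≤ |g (F b - F z₀ + F z₀)|
    rw [heq, hgF b hbmem, abs_of_pos (by linarith : (0:ℝ) < b)]
end
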